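/- Let Q be a positive definite quadratic form on ℝ^k with Q(a) = 1, and φ_{a,Q}(x) = (a·Q(x) + x)/Q(a + x). Then Q(φ_{a,Q}(x)) = Q(x)/Q(x + a) for all x with x ≠ -a. -/

import Mathlib

theorem stmt9 {k : ℕ} (Q : QuadraticForm ℝ (Fin k → ℝ)) (hQ : Q.PosDef)
    (a : Fin k → ℝ) (ha : Q a = 1) (x : Fin k → ℝ) (hx : x ≠ -a) :
    Q ((Q (a + x))⁻¹ • (Q x • a + x)) = Q x / Q (x + a) := by
  have hne : a + x ≠ 0 := fun h => hx (by rw [← eq_neg_of_add_eq_zero_right h])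
  have hpos : 0 < Q (a + x) := hQ _ hne
  have hQax : Q (a + x) ≠ 0 := ne_of_gt hpos
  have hadd : Q (a + x) = Q a + Q x + QuadraticMap.polar (⇑Q) a x := QuadraticMap.map_add (⇑Q) a x
  have hcomm : x + a = a + x := add_comm x a
  have h1 : Q (Q x • a + x) = Q x * Q (a + x) := by
    have e1 : Q (Q x • a + x) = Q (Q x • a) + Q x + QuadraticMap.polar (⇑Q) (Q x • a) x :=
      QuadraticMap.map_add (⇑Q) (Q x • a) x
    rw [e1, QuadraticMap.map_smul, QuadraticMap.polar_smul_left, ha, hadd, ha, smul_eq_mul, smul_eq_mul]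
    ring
  rw [QuadraticMap.map_smul, h1, hcomm]
  field_simp
  rw [smul_eq_mul]
  field_simp
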